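/- Let φ be a CNF formula over n ≥ 1 variables and let G(φ) be the associated symmetric two-player game. If G(φ) admits a mixed strategy profile that is both a Nash equilibrium and envy-proof, then φ is satisfiable. -/
import Mathlib


open Finset

variable {α β : Type*}

/-- Expected utility of `u` under the product of mixed strategies `p` and `q`. -/
def EU [Fintype α] [Fintype β] (u : α → β → ℝ) (p : α → ℝ) (q : β → ℝ) : ℝ :=
  ∑ a, ∑ b, p a * q b * u a b

/-- `p` is a probability distribution (mixed strategy). -/
def IsMixed [Fintype α] (p : α → ℝ) : Prop :=
  (∀ a, 0 ≤ p a) ∧ ∑ a, p a = 1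

/-- The pure action `a` viewed as a mixed strategy. -/
def pureStrat [DecidableEq α] (a : α) : α → ℝ :=
  fun a' => if a' = a then 1 else 0

/-- `(p,q)` is a Nash equilibrium of the two-player game `({u0,u1},{α,β})`. -/
def IsNash [Fintype α] [Fintype β] [DecidableEq α] [DecidableEq β]
    (u0 u1 : α → β → ℝ) (p : α → ℝ) (q : β → ℝ) : Prop :=
  (∀ a' : α, EU u0 (pureStrat a') q ≤ EU u0 p q) ∧
  (∀ b' : β, EU u1 p (pureStrat b') ≤ EU u1 p q)

/-- `(p,q)` is immune in the two-player game `({u0,u1},{α,β})`. -/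
def IsImmune [Fintype α] [Fintype β] [DecidableEq α] [DecidableEq β]
    (u0 u1 : α → β → ℝ) (p : α → ℝ) (q : β → ℝ) : Prop :=
  (∀ a' : α, EU u1 (pureStrat a') q ≥ EU u1 p q) ∧
  (∀ b' : β, EU u0 p (pureStrat b') ≥ EU u0 p q)

/-- `(p,q)` is envy-proof in the two-player game `({u0,u1},{α,β})`. -/
def IsEnvyProof [Fintype α] [Fintype β] [DecidableEq α] [DecidableEq β]
    (u0 u1 : α → β → ℝ) (p : α → ℝ) (q : β → ℝ) : Prop :=
  (∀ a' : α, EU u0 (pureStrat a') q - EU u0 p q ≤ EU u1 (pureStrat a') q - EU u1 p q) ∧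
  (∀ b' : β, EU u1 p (pureStrat b') - EU u1 p q ≤ EU u0 p (pureStrat b') - EU u0 p q)

/-- Literals over `n` variables: a variable index together with a sign. -/
abbrev Lit (n : ℕ) := Fin n × Bool

/-- The negation of a literal. -/
def negLit {n : ℕ} (l : Lit n) : Lit n := (l.1, !l.2)

/-- The common action set `Σ = V ∪ L ∪ C ∪ {f}` of the game `G(φ)`, where `C` is the
clause set of the CNF formula `φ`: variables, literals, clauses of `φ`, and a default
action `f`. -/
abbrev Act (n : ℕ) (C : Finset (Finset (Lit n))) :=
  Fin n ⊕ (Lit n ⊕ ({c : Finset (Lit n) // c ∈ C} ⊕ Unit))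

/-- The default action `f`. -/
def fAct (n : ℕ) (C : Finset (Finset (Lit n))) : Act n C := Sum.inr (Sum.inr (Sum.inr ()))

/-- Player 0's utility in the game `G(φ)` (with `β = -n`); player 1's utility is
`fun x y => gu n C y x` by symmetry. -/
def gu (n : ℕ) (C : Finset (Finset (Lit n))) : Act n C → Act n C → ℝ
  -- (var, ·)
  | Sum.inl _, Sum.inl _ => -(n : ℝ)
  | Sum.inl i, Sum.inr (Sum.inl l) => if l.1 = i then 0 else (n : ℝ)
  | Sum.inl _, Sum.inr (Sum.inr (Sum.inl _)) => -(n : ℝ)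
  | Sum.inl _, Sum.inr (Sum.inr (Sum.inr _)) => (n : ℝ) + 1
  -- (lit, ·)
  | Sum.inr (Sum.inl l), Sum.inl i =>
      if l.1 = i then 2 * ((n : ℝ) - 1) else (n : ℝ) - 2
  | Sum.inr (Sum.inl l0), Sum.inr (Sum.inl l1) =>
      if l0 = negLit l1 then -(n : ℝ) else (n : ℝ) - 1
  | Sum.inr (Sum.inl l), Sum.inr (Sum.inr (Sum.inl c)) =>
      if l ∈ c.1 then 2 * ((n : ℝ) - 1) else (n : ℝ) - 2
  | Sum.inr (Sum.inl _), Sum.inr (Sum.inr (Sum.inr _)) => (n : ℝ) - 1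
  -- (cls, ·)
  | Sum.inr (Sum.inr (Sum.inl _)), Sum.inl _ => -(n : ℝ)
  | Sum.inr (Sum.inr (Sum.inl c)), Sum.inr (Sum.inl l) =>
      if l ∈ c.1 then 0 else (n : ℝ)
  | Sum.inr (Sum.inr (Sum.inl _)), Sum.inr (Sum.inr (Sum.inl _)) => -(n : ℝ)
  | Sum.inr (Sum.inr (Sum.inl _)), Sum.inr (Sum.inr (Sum.inr _)) => (n : ℝ) + 1
  -- (f, ·)
  | Sum.inr (Sum.inr (Sum.inr _)), Sum.inl _ => (n : ℝ)
  | Sum.inr (Sum.inr (Sum.inr _)), Sum.inr (Sum.inl _) => (n : ℝ) - 1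
  | Sum.inr (Sum.inr (Sum.inr _)), Sum.inr (Sum.inr (Sum.inl _)) => (n : ℝ)
  | Sum.inr (Sum.inr (Sum.inr _)), Sum.inr (Sum.inr (Sum.inr _)) => (n : ℝ) + 2

-- generic lemmas
lemma EU_pureL [Fintype α] [Fintype β] [DecidableEq α] (u : α → β → ℝ) (a' : α) (q : β → ℝ) :
    EU u (pureStrat a') q = ∑ b, q b * u a' b := by
  unfold EU pureStrat
  rw [Finset.sum_eq_single a']
  · simp
  · intro a _ h; simp [h]
  · simp

lemma EU_pureR [Fintype α] [Fintype β] [DecidableEq β] (u : α → β → ℝ) (p : α → ℝ) (b' : β) :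
    EU u p (pureStrat b') = ∑ a, p a * u a b' := by
  unfold EU pureStrat
  refine Finset.sum_congr rfl fun a _ => ?_
  rw [Finset.sum_eq_single b']
  · simp
  · intro b _ h; simp [h]
  · simp

lemma supp_eq [Fintype α] {p g : α → ℝ} {c : ℝ} (hp0 : ∀ a, 0 ≤ p a) (hp1 : ∑ a, p a = 1)
    (hle : ∀ a, g a ≤ c) (hsum : ∑ a, p a * g a = c) : ∀ a, 0 < p a → g a = c := by
  intro a ha
  have h0 : ∑ x, p x * (c - g x) = 0 := by
    simp only [mul_sub]
    rw [Finset.sum_sub_distrib, ← Finset.sum_mul, hp1, hsum]; ring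
  have hnn : ∀ x ∈ Finset.univ, 0 ≤ p x * (c - g x) :=
    fun x _ => mul_nonneg (hp0 x) (sub_nonneg.2 (hle x))
  have := (Finset.sum_eq_zero_iff_of_nonneg hnn).1 h0 a (Finset.mem_univ a)
  have : c - g a = 0 := by
    rcases mul_eq_zero.1 this with h | h
    · exact absurd h (ne_of_gt ha)
    · exact h
  linarith

lemma ite_expand [Fintype α] (g : α → ℝ) (P : α → Prop) [DecidablePred P] (x y : ℝ) :
    ∑ a, g a * (if P a then x else y)
      = y * (∑ a, g a) + (x - y) * ∑ a, (if P a then g a else 0) := by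
  rw [Finset.mul_sum, Finset.mul_sum, ← Finset.sum_add_distrib]
  refine Finset.sum_congr rfl fun a _ => ?_
  by_cases h : P a <;> simp [h] <;> ring

section Game
variable {n : ℕ} {C : Finset (Finset (Lit n))}

def sV (r : Act n C → ℝ) : ℝ := ∑ i, r (Sum.inl i)
def sL (r : Act n C → ℝ) : ℝ := ∑ l : Lit n, r (Sum.inr (Sum.inl l))
def sK (r : Act n C → ℝ) : ℝ := ∑ c : {c : Finset (Lit n) // c ∈ C}, r (Sum.inr (Sum.inr (Sum.inl c)))
def sF (r : Act n C → ℝ) : ℝ := r (Sum.inr (Sum.inr (Sum.inr ())))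
def sI (r : Act n C → ℝ) (i : Fin n) : ℝ :=
  r (Sum.inr (Sum.inl (i, true))) + r (Sum.inr (Sum.inl (i, false)))
def sS (r : Act n C → ℝ) (c : Finset (Lit n)) : ℝ := ∑ l ∈ c, r (Sum.inr (Sum.inl l))
def sM (r : Act n C → ℝ) (l : Lit n) : ℝ :=
  r (Sum.inl l.1) + ∑ c : {c : Finset (Lit n) // c ∈ C},
    (if l ∈ c.1 then r (Sum.inr (Sum.inr (Sum.inl c))) else 0)

def Row (r : Act n C → ℝ) (a : Act n C) : ℝ := ∑ b, r b * gu n C a b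
def Col (r : Act n C → ℝ) (a : Act n C) : ℝ := ∑ b, r b * gu n C b a

lemma act_sum (f : Act n C → ℝ) :
    ∑ x, f x = (∑ i, f (Sum.inl i)) + ((∑ l : Lit n, f (Sum.inr (Sum.inl l)))
      + ((∑ c : {c : Finset (Lit n) // c ∈ C}, f (Sum.inr (Sum.inr (Sum.inl c))))
        + f (Sum.inr (Sum.inr (Sum.inr ()))))) := by
  simp [Fintype.sum_sum_type]

lemma sum_lit_fst (g : Lit n → ℝ) (i : Fin n) :
    ∑ l : Lit n, (if l.1 = i then g l else 0) = g (i, true) + g (i, false) := by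
  rw [Fintype.sum_prod_type]
  rw [Finset.sum_eq_single i]
  · simp [Fintype.sum_bool]
  · intro j _ h; simp [h]
  · simp

lemma sum_lit_mem (g : Lit n → ℝ) (c : Finset (Lit n)) :
    ∑ l : Lit n, (if l ∈ c then g l else 0) = ∑ l ∈ c, g l := by
  rw [Finset.sum_ite_mem, Finset.univ_inter]

lemma sum_sI (r : Act n C → ℝ) : ∑ i, sI r i = sL r := by
  simp [sI, sL, Fintype.sum_prod_type, Fintype.sum_bool]

end Game

section Game2
variable {n : ℕ} {C : Finset (Finset (Lit n))}

lemma negLit_negLit (l : Lit n) : negLit (negLit l) = l := by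
  cases l; simp [negLit]

lemma Row_f (r : Act n C → ℝ) :
    Row r (fAct n C) = ((n:ℝ)-1) * sL r + (n:ℝ) * sV r + (n:ℝ) * sK r + ((n:ℝ)+2) * sF r := by
  unfold Row
  rw [act_sum]
  simp only [fAct, gu, ← Finset.sum_mul]
  unfold sV sL sK sF; ring

lemma Row_var (r : Act n C → ℝ) (i : Fin n) :
    Row r (Sum.inl i) = (n:ℝ) * sL r - (n:ℝ) * sI r i - (n:ℝ) * sV r - (n:ℝ) * sK r
      + ((n:ℝ)+1) * sF r := by
  unfold Row
  rw [act_sum]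
  simp only [gu]
  rw [ite_expand (fun l => r (Sum.inr (Sum.inl l))) (fun l : Lit n => l.1 = i) 0 (n:ℝ),
    sum_lit_fst (fun l => r (Sum.inr (Sum.inl l))) i]
  simp only [← Finset.sum_mul]
  unfold sV sL sK sF sI; ring

lemma Row_cls (r : Act n C → ℝ) (c : {c : Finset (Lit n) // c ∈ C}) :
    Row r (Sum.inr (Sum.inr (Sum.inl c))) = (n:ℝ) * sL r - (n:ℝ) * sS r c.1 - (n:ℝ) * sV r
      - (n:ℝ) * sK r + ((n:ℝ)+1) * sF r := by
  unfold Row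
  rw [act_sum]
  simp only [gu]
  rw [ite_expand (fun l => r (Sum.inr (Sum.inl l))) (fun l : Lit n => l ∈ c.1) 0 (n:ℝ),
    sum_lit_mem (fun l => r (Sum.inr (Sum.inl l))) c.1]
  simp only [← Finset.sum_mul]
  unfold sV sL sK sF sS; ring

lemma Row_lit (r : Act n C → ℝ) (l0 : Lit n) :
    Row r (Sum.inr (Sum.inl l0)) = ((n:ℝ)-1) * sL r
      - (2*(n:ℝ)-1) * r (Sum.inr (Sum.inl (negLit l0)))
      + ((n:ℝ)-2) * (sV r + sK r) + (n:ℝ) * sM r l0 + ((n:ℝ)-1) * sF r := by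
  unfold Row
  rw [act_sum]
  simp only [gu]
  have hcond : ∀ l : Lit n, (l0 = negLit l) = (l = negLit l0) := by
    intro l
    exact propext ⟨fun h => by rw [h, negLit_negLit], fun h => by rw [h, negLit_negLit]⟩
  simp only [hcond]
  rw [ite_expand (fun i => r (Sum.inl i)) (fun i : Fin n => l0.1 = i) (2*((n:ℝ)-1)) ((n:ℝ)-2),
    ite_expand (fun l => r (Sum.inr (Sum.inl l))) (fun l : Lit n => l = negLit l0) (-(n:ℝ)) ((n:ℝ)-1),
    ite_expand (fun c => r (Sum.inr (Sum.inr (Sum.inl c)))) (fun c : {c : Finset (Lit n) // c ∈ C} => l0 ∈ c.1) (2*((n:ℝ)-1)) ((n:ℝ)-2)]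
  rw [Finset.sum_ite_eq Finset.univ l0.1 (fun i => r (Sum.inl i)),
    Finset.sum_ite_eq' Finset.univ (negLit l0) (fun l => r (Sum.inr (Sum.inl l)))]
  simp only [Finset.mem_univ, if_true]
  unfold sV sL sK sF sM; ring

lemma Col_var (r : Act n C → ℝ) (i : Fin n) :
    Col r (Sum.inl i) = ((n:ℝ)-2) * sL r + (n:ℝ) * sI r i - (n:ℝ) * sV r - (n:ℝ) * sK r
      + (n:ℝ) * sF r := by
  unfold Col
  rw [act_sum]
  simp only [gu]
  rw [ite_expand (fun l => r (Sum.inr (Sum.inl l))) (fun l : Lit n => l.1 = i) (2*((n:ℝ)-1)) ((n:ℝ)-2),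
    sum_lit_fst (fun l => r (Sum.inr (Sum.inl l))) i]
  simp only [← Finset.sum_mul]
  unfold sV sL sK sF sI; ring

lemma Col_cls (r : Act n C → ℝ) (c : {c : Finset (Lit n) // c ∈ C}) :
    Col r (Sum.inr (Sum.inr (Sum.inl c))) = ((n:ℝ)-2) * sL r + (n:ℝ) * sS r c.1 - (n:ℝ) * sV r
      - (n:ℝ) * sK r + (n:ℝ) * sF r := by
  unfold Col
  rw [act_sum]
  simp only [gu]
  rw [ite_expand (fun l => r (Sum.inr (Sum.inl l))) (fun l : Lit n => l ∈ c.1) (2*((n:ℝ)-1)) ((n:ℝ)-2),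
    sum_lit_mem (fun l => r (Sum.inr (Sum.inl l))) c.1]
  simp only [← Finset.sum_mul]
  unfold sV sL sK sF sS; ring

end Game2

section Game3
variable {n : ℕ} {C : Finset (Finset (Lit n))}

lemma mixed_decomp (r : Act n C → ℝ) (h1 : ∑ a, r a = 1) :
    sV r + (sL r + (sK r + sF r)) = 1 := by
  rw [← h1]; exact (act_sum r).symm

lemma aux_noZ (hn : (1:ℝ) ≤ (n:ℝ))
    (r s : Act n C → ℝ) (hr0 : ∀ a, 0 ≤ r a) (hr1 : ∑ a, r a = 1)
    (hs0 : ∀ a, 0 ≤ s a) (hs1 : ∑ a, s a = 1) (v w : ℝ)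
    (hsupp : ∀ a, 0 < r a → Row s a = v)
    (hDsupp : ∀ a, 0 < r a → Row s a - Col s a = 0)
    (hsf : Row s (fAct n C) ≤ v) (hrf : Row r (fAct n C) ≤ w) (hvw : v = w)
    (hFs : sF s = 0) (hFr : sF r = 0) :
    ∀ z : Act n C, ((∃ i, z = Sum.inl i) ∨ (∃ c, z = Sum.inr (Sum.inr (Sum.inl c)))) →
      r z = 0 := by
  have hdecr := mixed_decomp r hr1
  have hdecs := mixed_decomp s hs1
  have hsVs : 0 ≤ sV s := Finset.sum_nonneg fun i _ => hs0 _
  have hsKs : 0 ≤ sK s := Finset.sum_nonneg fun c _ => hs0 _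
  have hsVr : 0 ≤ sV r := Finset.sum_nonneg fun i _ => hr0 _
  have hsKr : 0 ≤ sK r := Finset.sum_nonneg fun c _ => hr0 _
  have main : ∀ (z : Act n C) (LS : ℝ),
      Row s z = (n:ℝ)*sL s - (n:ℝ)*LS - (n:ℝ)*sV s - (n:ℝ)*sK s + ((n:ℝ)+1)*sF s →
      Col s z = ((n:ℝ)-2)*sL s + (n:ℝ)*LS - (n:ℝ)*sV s - (n:ℝ)*sK s + (n:ℝ)*sF s →
      r z ≤ sV r + sK r → ¬ (0 < r z) := by
    intro z LS hRow hCol hle hz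
    have hv := hsupp z hz
    have hD := hDsupp z hz
    have hLS : (n:ℝ)*LS = sL s := by rw [hRow, hCol] at hD; linarith
    have hRf := hsf
    rw [Row_f] at hRf
    have h1 : ((n:ℝ)-1)*sL s + (n:ℝ)*sV s + (n:ℝ)*sK s + ((n:ℝ)+2)*sF s
        ≤ (n:ℝ)*sL s - (n:ℝ)*LS - (n:ℝ)*sV s - (n:ℝ)*sK s + ((n:ℝ)+1)*sF s := by
      rw [← hRow, hv]; exact hRf
    have h2 : (n:ℝ)*sV s + (n:ℝ)*sK s ≤ 0 := by rw [hFs] at h1; linarith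
    have h3 : sV s + sK s ≤ (n:ℝ)*(sV s + sK s) :=
      le_mul_of_one_le_left (add_nonneg hsVs hsKs) hn
    have hVZ : sV s + sK s = 0 := by linarith
    have hVs0 : sV s = 0 := by linarith
    have hKs0 : sK s = 0 := by linarith
    have hLs1 : sL s = 1 := by linarith
    have hvval : v = (n:ℝ) - 1 := by
      rw [← hv, hRow, hFs, hVs0, hKs0, hLs1]
      rw [hLs1] at hLS
      linarith
    have hRrf := hrf
    rw [Row_f, hFr] at hRrf
    have hsLr1 : sL r = 1 - sV r - sK r := by linarith
    have hnsLr : (n:ℝ)*sL r = (n:ℝ) - (n:ℝ)*sV r - (n:ℝ)*sK r := by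
      rw [hsLr1]; ring
    rw [hvw] at hvval
    have hfin : sV r + sK r ≤ 0 := by linarith
    linarith
  intro z hz
  rcases hz with ⟨i, rfl⟩ | ⟨c, rfl⟩
  · by_contra hne
    have hpos : 0 < r (Sum.inl i) := lt_of_le_of_ne (hr0 _) (Ne.symm hne)
    exact main _ (sI s i) (Row_var s i) (Col_var s i)
      (le_add_of_le_of_nonneg
        (Finset.single_le_sum (f := fun j => r (Sum.inl j)) (fun j _ => hr0 _)
          (Finset.mem_univ i)) hsKr) hpos
  · by_contra hne
    have hpos : 0 < r (Sum.inr (Sum.inr (Sum.inl c))) := lt_of_le_of_ne (hr0 _) (Ne.symm hne)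
    exact main _ (sS s c.1) (Row_cls s c) (Col_cls s c)
      (le_add_of_nonneg_of_le hsVr
        (Finset.single_le_sum (f := fun d => r (Sum.inr (Sum.inr (Sum.inl d)))) (fun d _ => hr0 _)
          (Finset.mem_univ c))) hpos

end Game3

theorem satisfiable_of_good_profile
    (n : ℕ) (hn : 1 ≤ n) (C : Finset (Finset (Lit n)))
    (hC : ∀ c ∈ C, c.Nonempty)
    (h : ∃ (p q : Act n C → ℝ), (∀ a, 0 ≤ p a) ∧ (∑ a, p a = 1) ∧ (∀ a, 0 ≤ q a) ∧ (∑ a, q a = 1) ∧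
        (∀ a', EU (gu n C) (pureStrat a') q ≤ EU (gu n C) p q) ∧
        (∀ b', EU (fun x y => gu n C y x) p (pureStrat b') ≤ EU (fun x y => gu n C y x) p q) ∧
        (∀ a', EU (gu n C) (pureStrat a') q - EU (gu n C) p q ≤
          EU (fun x y => gu n C y x) (pureStrat a') q - EU (fun x y => gu n C y x) p q) ∧
        (∀ b', EU (fun x y => gu n C y x) p (pureStrat b') - EU (fun x y => gu n C y x) p q ≤
          EU (gu n C) p (pureStrat b') - EU (gu n C) p q)) :
    ∃ σ : Fin n → Bool, ∀ c ∈ C, ∃ l ∈ c, σ l.1 = l.2 := by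
  obtain ⟨p, q, hp0, hp1, hq0, hq1, hn1, hn2, he1, he2⟩ := h
  have hnR : (1:ℝ) ≤ (n:ℝ) := by exact_mod_cast hn
  set v0 := EU (gu n C) p q with hv0d
  set v1 := EU (fun x y => gu n C y x) p q with hv1d
  -- rewrite EU-pure terms as Row/Col
  have hRowA : ∀ a, EU (gu n C) (pureStrat a) q = Row q a := fun a => EU_pureL _ a q
  have hColA : ∀ a, EU (fun x y => gu n C y x) (pureStrat a) q = Col q a := fun a =>
    EU_pureL _ a q
  have hRowB : ∀ b, EU (fun x y => gu n C y x) p (pureStrat b) = Row p b := fun b =>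
    EU_pureR _ p b
  have hColB : ∀ b, EU (gu n C) p (pureStrat b) = Col p b := fun b => EU_pureR _ p b
  have hNA : ∀ a, Row q a ≤ v0 := fun a => by have := hn1 a; rwa [hRowA] at this
  have hNB : ∀ b, Row p b ≤ v1 := fun b => by have := hn2 b; rwa [hRowB] at this
  have hEPA : ∀ a, Row q a - Col q a ≤ v0 - v1 := fun a => by
    have := he1 a; rw [hRowA, hColA] at this; linarith
  have hEPB : ∀ b, Row p b - Col p b ≤ v1 - v0 := fun b => by
    have := he2 b; rw [hRowB, hColB] at this; linarith
  -- expected values as sums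
  have hv0A : ∑ a, p a * Row q a = v0 := by
    rw [hv0d]; unfold EU Row
    exact Finset.sum_congr rfl fun a _ => by
      rw [Finset.mul_sum]; exact Finset.sum_congr rfl fun b _ => by ring
  have hv1A : ∑ a, p a * Col q a = v1 := by
    rw [hv1d]; unfold EU Col
    exact Finset.sum_congr rfl fun a _ => by
      rw [Finset.mul_sum]; exact Finset.sum_congr rfl fun b _ => by ring
  have hv1B : ∑ b, q b * Row p b = v1 := by
    rw [hv1d]; unfold EU Row; rw [Finset.sum_comm]
    exact Finset.sum_congr rfl fun b _ => by
      rw [Finset.mul_sum]; exact Finset.sum_congr rfl fun a _ => by ring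
  have hv0B : ∑ b, q b * Col p b = v0 := by
    rw [hv0d]; unfold EU Col; rw [Finset.sum_comm]
    exact Finset.sum_congr rfl fun b _ => by
      rw [Finset.mul_sum]; exact Finset.sum_congr rfl fun a _ => by ring
  -- support equalities
  have hSA : ∀ a, 0 < p a → Row q a = v0 := supp_eq hp0 hp1 hNA hv0A
  have hSB : ∀ b, 0 < q b → Row p b = v1 := supp_eq hq0 hq1 hNB hv1B
  have hSDA : ∀ a, 0 < p a → Row q a - Col q a = v0 - v1 :=
    supp_eq hp0 hp1 hEPA (by
      simp only [mul_sub]; rw [Finset.sum_sub_distrib, hv0A, hv1A])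
  have hSDB : ∀ b, 0 < q b → Row p b - Col p b = v1 - v0 :=
    supp_eq hq0 hq1 hEPB (by
      simp only [mul_sub]; rw [Finset.sum_sub_distrib, hv1B, hv0B])
  -- step 1: no weight on f, and v0 = v1
  have hsumI : ∀ s : Act n C → ℝ,
      ∑ i : Fin n, (2*sL s - 2*(n:ℝ)*sI s i + sF s) = (n:ℝ) * sF s := by
    intro s
    rw [Finset.sum_add_distrib, Finset.sum_sub_distrib, Finset.sum_const, Finset.sum_const,
      ← Finset.mul_sum, sum_sI, Finset.card_univ, Fintype.card_fin, nsmul_eq_mul]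
    ring
  have hDvarA : ∀ i, 2*sL q - 2*(n:ℝ)*sI q i + sF q ≤ v0 - v1 := fun i => by
    have := hEPA (Sum.inl i); rw [Row_var, Col_var] at this; linarith
  have hDvarB : ∀ i, 2*sL p - 2*(n:ℝ)*sI p i + sF p ≤ v1 - v0 := fun i => by
    have := hEPB (Sum.inl i); rw [Row_var, Col_var] at this; linarith
  have hsc : ∀ x : ℝ, ∑ _i : Fin n, x = (n:ℝ) * x := fun x => by
    rw [Finset.sum_const, Finset.card_univ, Fintype.card_fin, nsmul_eq_mul]
  have hfq : (n:ℝ) * sF q ≤ (n:ℝ) * (v0 - v1) := by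
    have h := Finset.sum_le_sum (s := Finset.univ) fun i (_ : i ∈ Finset.univ) => hDvarA i
    rwa [hsumI q, hsc (v0 - v1)] at h
  have hfp : (n:ℝ) * sF p ≤ (n:ℝ) * (v1 - v0) := by
    have h := Finset.sum_le_sum (s := Finset.univ) fun i (_ : i ∈ Finset.univ) => hDvarB i
    rwa [hsumI p, hsc (v1 - v0)] at h
  have hFq0 : 0 ≤ sF q := hq0 _
  have hFp0 : 0 ≤ sF p := hp0 _
  have hFtot : sF q + sF p ≤ (n:ℝ) * (sF q + sF p) :=
    le_mul_of_one_le_left (add_nonneg hFq0 hFp0) hnR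
  have hFq : sF q = 0 := by linarith
  have hFp : sF p = 0 := by linarith
  have hδ : v0 = v1 := by
    have h1 : 0 ≤ (n:ℝ) * (v0 - v1) := by rw [hFq, mul_zero] at hfq; linarith
    have h2 : (n:ℝ) * (v0 - v1) ≤ 0 := by rw [hFp, mul_zero] at hfp; linarith
    have h3 : (n:ℝ) * (v0 - v1) = 0 := le_antisymm h2 h1
    rcases mul_eq_zero.1 h3 with h | h
    · linarith
    · linarith
  -- step 2: no weight on variables and clauses
  have hauxP := aux_noZ hnR p q hp0 hp1 hq0 hq1 v0 v1 hSA
    (fun a ha => by rw [hSDA a ha, hδ]; ring) (hNA _) (hNB _) hδ hFq hFp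
  have hauxQ := aux_noZ hnR q p hq0 hq1 hp0 hp1 v1 v0 hSB
    (fun b hb => by rw [hSDB b hb, hδ]; ring) (hNB _) (hNA _) hδ.symm hFp hFq
  have hpV : ∀ i, p (Sum.inl i) = 0 := fun i => hauxP _ (Or.inl ⟨i, rfl⟩)
  have hpK : ∀ c, p (Sum.inr (Sum.inr (Sum.inl c))) = 0 := fun c => hauxP _ (Or.inr ⟨c, rfl⟩)
  have hqV : ∀ i, q (Sum.inl i) = 0 := fun i => hauxQ _ (Or.inl ⟨i, rfl⟩)
  have hqK : ∀ c, q (Sum.inr (Sum.inr (Sum.inl c))) = 0 := fun c => hauxQ _ (Or.inr ⟨c, rfl⟩)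
  have hsVq : sV q = 0 := Finset.sum_eq_zero fun i _ => hqV i
  have hsKq : sK q = 0 := Finset.sum_eq_zero fun c _ => hqK c
  have hsVp : sV p = 0 := Finset.sum_eq_zero fun i _ => hpV i
  have hsKp : sK p = 0 := Finset.sum_eq_zero fun c _ => hpK c
  have hsLq : sL q = 1 := by have := mixed_decomp q hq1; linarith
  have hsLp : sL p = 1 := by have := mixed_decomp p hp1; linarith
  have hsMq : ∀ l : Lit n, sM q l = 0 := fun l => by
    unfold sM; rw [hqV]; simp [hqK]
  have hsMp : ∀ l : Lit n, sM p l = 0 := fun l => by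
    unfold sM; rw [hpV]; simp [hpK]
  -- step 4: each variable gets p-weight exactly 1/n
  have hIp1 : ∀ i, 1 ≤ (n:ℝ) * sI p i := fun i => by
    have := hDvarB i; rw [hsLp, hFp, hδ] at this; linarith
  have hIpsum : ∑ i : Fin n, ((n:ℝ) * sI p i - 1) = 0 := by
    rw [Finset.sum_sub_distrib, ← Finset.mul_sum, sum_sI, hsLp, hsc 1]; ring
  have hnIp : ∀ i, (n:ℝ) * sI p i = 1 := by
    have h := (Finset.sum_eq_zero_iff_of_nonneg
      (fun i (_ : i ∈ Finset.univ) => by linarith [hIp1 i])).1 hIpsum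
    intro i; have := h i (Finset.mem_univ i); linarith
  -- step 5: negations of support literals get no weight
  have hnegA : ∀ l : Lit n, 0 < p (Sum.inr (Sum.inl l)) →
      q (Sum.inr (Sum.inl (negLit l))) = 0 := by
    intro l hl
    have h1 := hSA _ hl
    rw [Row_lit, hsLq, hsVq, hsKq, hFq, hsMq l] at h1
    have h2 := hNA (fAct n C)
    rw [Row_f, hsLq, hsVq, hsKq, hFq] at h2
    have hqn : 0 ≤ q (Sum.inr (Sum.inl (negLit l))) := hq0 _
    have h3 : (2*(n:ℝ)-1) * q (Sum.inr (Sum.inl (negLit l))) ≤ 0 := by linarith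
    have h4 : q (Sum.inr (Sum.inl (negLit l))) ≤
        (2*(n:ℝ)-1) * q (Sum.inr (Sum.inl (negLit l))) :=
      le_mul_of_one_le_left hqn (by linarith)
    linarith
  have hnegB : ∀ l : Lit n, 0 < q (Sum.inr (Sum.inl l)) →
      p (Sum.inr (Sum.inl (negLit l))) = 0 := by
    intro l hl
    have h1 := hSB _ hl
    rw [Row_lit, hsLp, hsVp, hsKp, hFp, hsMp l] at h1
    have h2 := hNB (fAct n C)
    rw [Row_f, hsLp, hsVp, hsKp, hFp] at h2
    have hpn : 0 ≤ p (Sum.inr (Sum.inl (negLit l))) := hp0 _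
    have h3 : (2*(n:ℝ)-1) * p (Sum.inr (Sum.inl (negLit l))) ≤ 0 := by linarith
    have h4 : p (Sum.inr (Sum.inl (negLit l))) ≤
        (2*(n:ℝ)-1) * p (Sum.inr (Sum.inl (negLit l))) :=
      le_mul_of_one_le_left hpn (by linarith)
    linarith
  -- the assignment
  refine ⟨fun i => if 0 < q (Sum.inr (Sum.inl (i, true))) then true else false, ?_⟩
  have hkey : ∀ l : Lit n, 0 < q (Sum.inr (Sum.inl l)) →
      (if 0 < q (Sum.inr (Sum.inl (l.1, true))) then true else false) = l.2 := by
    rintro ⟨i, b⟩ hql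
    have hnotboth : ¬ (0 < q (Sum.inr (Sum.inl (i, true))) ∧
        0 < q (Sum.inr (Sum.inl (i, false)))) := by
      rintro ⟨h1, h2⟩
      have e1 : p (Sum.inr (Sum.inl (i, false))) = 0 := by
        have := hnegB (i, true) h1; simpa [negLit] using this
      have e2 : p (Sum.inr (Sum.inl (i, true))) = 0 := by
        have := hnegB (i, false) h2; simpa [negLit] using this
      have hz : sI p i = 0 := by unfold sI; rw [e1, e2]; ring
      have := hnIp i
      rw [hz, mul_zero] at this
      linarith
    cases b with
    | true => simp [hql]
    | false =>
      have hne : ¬ 0 < q (Sum.inr (Sum.inl (i, true))) := fun hcon => hnotboth ⟨hcon, hql⟩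
      simp [hne]
  intro c hc
  have hcl := hEPA (Sum.inr (Sum.inr (Sum.inl ⟨c, hc⟩)))
  rw [Row_cls, Col_cls, hsLq, hFq, hδ] at hcl
  have hSnn : 0 ≤ sS q c := Finset.sum_nonneg fun l _ => hq0 _
  have hS1 : 1 ≤ (n:ℝ) * sS q c := by linarith
  have hSpos : 0 < sS q c := by
    by_contra hnp
    push_neg at hnp
    have h0 : sS q c = 0 := le_antisymm hnp hSnn
    rw [h0, mul_zero] at hS1
    linarith
  obtain ⟨l, hl, hql⟩ := Finset.exists_lt_of_sum_lt (s := c) (f := fun _ => (0:ℝ))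
    (g := fun l => q (Sum.inr (Sum.inl l))) (by
      rw [Finset.sum_const_zero]; exact hSpos)
  exact ⟨l, hl, hkey l hql⟩

/-- if `G(φ)` admits a mixed strategy profile that is both a Nash
equilibrium and envy-proof, then `φ` is satisfiable. -/
theorem envyProof_nash_implies_satisfiable
    (n : ℕ) (hn : 1 ≤ n) (C : Finset (Finset (Lit n)))
    (hC : ∀ c ∈ C, c.Nonempty)
    (h : ∃ (p q : Act n C → ℝ), IsMixed p ∧ IsMixed q ∧
        IsNash (gu n C) (fun x y => gu n C y x) p q ∧
        IsEnvyProof (gu n C) (fun x y => gu n C y x) p q) :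
    ∃ σ : Fin n → Bool, ∀ c ∈ C, ∃ l ∈ c, σ l.1 = l.2 := by
  obtain ⟨p, q, ⟨hp0, hp1⟩, ⟨hq0, hq1⟩, ⟨hn1, hn2⟩, ⟨he1, he2⟩⟩ := h
  exact satisfiable_of_good_profile n hn C hC ⟨p, q, hp0, hp1, hq0, hq1, hn1, hn2, he1, he2⟩
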